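/- For every cofibration (φ,f) : A ↣ B in Γ(C), there is a weak equivalence A ∨ B/A → B relative to A: the underlying set function is the partition-type map induced by the unique order-preserving-on-blocks bijection [b] ≅ [a] ⊔ (im φ)^c placing im φ first, with components the isomorphisms f_i on the A-part and identities on the (B/A)-part; this morphism is a weak equivalence and its precomposition with the cofibration A ↣ A ∨ B/A equals (φ,f). -/

import Mathlib

open CategoryTheory

universe v u

/-- A permutative (strict symmetric monoidal) category: a category whose objects form
a monoid (the strictly associative and unital tensor product on objects), together
with a tensor product on morphisms and a symmetry (braiding). -/
structure Permutative where
  Obj : Type u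
  [cat : Category.{v} Obj]
  [mon : Monoid Obj]
  tHom : ∀ {X Y Z W : Obj}, (X ⟶ Y) → (Z ⟶ W) → (X * Z ⟶ Y * W)
  tHom_id : ∀ X Z : Obj, tHom (𝟙 X) (𝟙 Z) = 𝟙 (X * Z)
  tHom_comp : ∀ {X₁ X₂ X₃ Y₁ Y₂ Y₃ : Obj} (f : X₁ ⟶ X₂) (f' : X₂ ⟶ X₃)
    (g : Y₁ ⟶ Y₂) (g' : Y₂ ⟶ Y₃),
    tHom (f ≫ f') (g ≫ g') = tHom f g ≫ tHom f' g'
  braid : ∀ X Y : Obj, X * Y ≅ Y * X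
  braid_braid : ∀ X Y : Obj, (braid X Y).hom ≫ (braid Y X).hom = 𝟙 (X * Y)

attribute [instance] Permutative.cat Permutative.mon

variable {P : Permutative}

/-- A morphism `(φ, f) : A → B` in `Γ(C)`: a set-valued function
`φ : [a] → 2^[b]` and, for each `i` with `φ(i) ≠ ∅`, a morphism
`f_i : A_i ⟶ B_{j_1} ⊗ ⋯ ⊗ B_{j_p}` where `φ(i) = {j_1 < … < j_p}`. -/
structure GHom (P : Permutative) (A B : List P.Obj) where
  φ : Fin A.length → Finset (Fin B.length)
  f : ∀ i, (φ i).Nonempty → (A.get i ⟶ (((φ i).sort (· ≤ ·)).map B.get).prod)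

/-- The identity morphism of `Γ(C)`. -/
def idG (A : List P.Obj) : GHom P A A where
  φ := fun i => {i}
  f := fun i _ => eqToHom (by simp)

/-- Composition in `Γ(C)` of a morphism whose underlying set-function is
singleton-valued (given by `σ`) with an arbitrary morphism. -/
def compSingle {A B C : List P.Obj} (σ : Fin A.length → Fin B.length)
    (u : GHom P A B) (hu : ∀ i, u.φ i = {σ i}) (v : GHom P B C) : GHom P A C where
  φ := fun i => v.φ (σ i)
  f := fun i h =>
    u.f i (by rw [hu i]; exact ⟨σ i, Finset.mem_singleton_self _⟩) ≫
      eqToHom (by rw [hu i]; simp) ≫ v.f (σ i) h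

/-- The index of `A` in the concatenation `A ++ B`. -/
def inlIdx (A B : List P.Obj) (i : Fin A.length) : Fin (A ++ B).length :=
  ⟨i.1, by rw [List.length_append]; omega⟩

/-- The canonical inclusion `A → A ∨ B` in `Γ(C)`. -/
def inlG (A B : List P.Obj) : GHom P A (A ++ B) where
  φ := fun i => {inlIdx A B i}
  f := fun i _ => eqToHom (by simp [inlIdx, List.getElem_append_left])

/-- Cofibrations in `Γ(C)`: `φ` is induced by an injection and every component is an
isomorphism. -/
def IsCof {A B : List P.Obj} (u : GHom P A B) : Prop :=
  ∃ σ : Fin A.length → Fin B.length, Function.Injective σ ∧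
    (∀ i, u.φ i = {σ i}) ∧ ∀ i h, IsIso (u.f i h)

/-- The complement `[b] \ im φ` of the image of an injection. -/
def imCompl {n a : ℕ} (σ : Fin a → Fin n) : Finset (Fin n) :=
  Finset.univ \ Finset.image σ Finset.univ

/-- The cofiber `B/A` of a cofibration with underlying injection `σ`: the tuple of
entries of `B` indexed by `[b] \ im φ` (in increasing order). -/
def cofiberObj {a : ℕ} (B : List P.Obj) (σ : Fin a → Fin B.length) : List P.Obj :=
  ((imCompl σ).sort (· ≤ ·)).map B.get

/-- The explicit pushout `C ∪_A B` of `C ← A ↣ B` along a cofibration with underlying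
injection `σ`: indexed by `[c] ⊔ ([b] \ im φ)` with entries from `C` and `B`. -/
def pushoutObj {a : ℕ} (C B : List P.Obj) (σ : Fin a → Fin B.length) : List P.Obj :=
  C ++ cofiberObj B σ

/-- Weak equivalences in `Γ(C)`: the values of `φ` are pairwise disjoint and
cover `[b]`. -/
def IsWeq {A B : List P.Obj} (u : GHom P A B) : Prop :=
  (∀ i j, i ≠ j → Disjoint (u.φ i) (u.φ j)) ∧ Finset.univ.biUnion u.φ = Finset.univ

/-- The splitting map `A ∨ B/A → B` associated to a cofibration `(φ, f) : A ↣ B`: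
the underlying set-function is the partition-type map induced by the bijection
`[b] ≅ [a] ⊔ (im φ)^c` placing `im φ` first; the components are the `f_i` on the
`A`-part and identities on the `B/A`-part. -/
def splitMap {A B : List P.Obj} (u : GHom P A B)
    (σ : Fin A.length → Fin B.length) (hu : ∀ i, u.φ i = {σ i}) :
    GHom P (A ++ cofiberObj B σ) B where
  φ := fun i =>
    if h : i.1 < A.length then {σ ⟨i.1, h⟩}
    else {((imCompl σ).sort (· ≤ ·)).get ⟨i.1 - A.length, by
      have h2 := i.2
      simp only [List.length_append, cofiberObj, List.length_map] at h2
      omega⟩}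
  f := fun i h =>
    if hlt : i.1 < A.length then
      eqToHom (List.getElem_append_left hlt) ≫
        u.f ⟨i.1, hlt⟩ (by rw [hu]; exact ⟨_, Finset.mem_singleton_self _⟩) ≫
        eqToHom (by
          rw [hu]; beta_reduce; split
          · rfl
          · omega)
    else
      eqToHom (by
        beta_reduce
        split
        · omega
        · rw [List.get_eq_getElem, List.getElem_append_right (Nat.le_of_not_lt hlt)]
          simp [cofiberObj])

-- scratch appended part
lemma sortGet_not_image {n a : ℕ} (σ : Fin a → Fin n)
    (k : Fin ((imCompl σ).sort (· ≤ ·)).length) :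
    ((imCompl σ).sort (· ≤ ·)).get k ∉ Finset.image σ Finset.univ := by
  have hm : ((imCompl σ).sort (· ≤ ·)).get k ∈ imCompl σ := by
    rw [← Finset.mem_sort (α := Fin n) (· ≤ ·)]
    exact List.get_mem _ k
  simp [imCompl] at hm
  simpa [Finset.mem_image, imCompl, List.get_eq_getElem] using hm

theorem GHom.ext' {P : Permutative} {A B : List P.Obj} {u v : GHom P A B}
    (hφ : u.φ = v.φ)
    (hf : ∀ i h h', u.f i h = v.f i h' ≫ eqToHom (by rw [hφ])) : u = v := by
  obtain ⟨φu, fu⟩ := u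
  obtain ⟨φv, fv⟩ := v
  simp only at hφ
  subst hφ
  congr 1
  funext i h
  simpa using hf i h h

/-- for every cofibration `(φ, f) : A ↣ B` in `Γ(C)` there is a weak
equivalence `A ∨ B/A → B` relative to `A`: the splitting map is a weak equivalence
and its precomposition with the cofibration `A ↣ A ∨ B/A` equals `(φ, f)`. -/
theorem weakly_split_cofibrations (P : Permutative) (A B : List P.Obj)
    (u : GHom P A B) (σ : Fin A.length → Fin B.length)
    (hσ : Function.Injective σ) (hu : ∀ i, u.φ i = {σ i})
    (hiso : ∀ i h, IsIso (u.f i h)) :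
    IsWeq (splitMap u σ hu) ∧
    compSingle (inlIdx A (cofiberObj B σ)) (inlG A (cofiberObj B σ)) (fun _ => rfl)
      (splitMap u σ hu) = u := by
  constructor
  · constructor
    · intro i j hij
      simp only [splitMap]
      split <;> split <;> rename_i h1 h2 <;>
        simp only [Finset.disjoint_singleton_left, Finset.mem_singleton]
      · intro he
        have h3 := hσ he
        simp only [Fin.mk.injEq] at h3
        exact hij (Fin.ext h3)
      · intro he
        have : σ ⟨i.1, h1⟩ ∈ Finset.image σ Finset.univ := Finset.mem_image_of_mem _ (Finset.mem_univ _)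
        rw [he] at this
        exact absurd this (sortGet_not_image σ _)
      · intro he
        have : σ ⟨j.1, h2⟩ ∈ Finset.image σ Finset.univ := Finset.mem_image_of_mem _ (Finset.mem_univ _)
        rw [← he] at this
        exact absurd this (sortGet_not_image σ _)
      · intro he
        have hnd := (imCompl σ).sort_nodup (· ≤ ·)
        have := hnd.get_inj_iff.mp he
        apply hij
        apply Fin.ext
        have hi := i.2; have hj := j.2
        have := congrArg Fin.val this
        simp at this
        omega
    · apply Finset.eq_univ_of_forall
      intro j
      rw [Finset.mem_biUnion]
      by_cases hj : j ∈ Finset.image σ Finset.univ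
      · obtain ⟨i, -, rfl⟩ := Finset.mem_image.mp hj
        refine ⟨⟨i.1, by simp [cofiberObj]; omega⟩, Finset.mem_univ _, ?_⟩
        simp [splitMap, i.2]
      · have hj' : j ∈ imCompl σ := by simp [imCompl, Finset.mem_image] at hj ⊢; exact hj
        rw [← Finset.mem_sort (α := Fin B.length) (· ≤ ·)] at hj'
        obtain ⟨k, hk⟩ := List.mem_iff_get.mp hj'
        have hlen : ((imCompl σ).sort (· ≤ ·)).length = (cofiberObj B σ : List P.Obj).length := by
          simp [cofiberObj]
        refine ⟨⟨A.length + k.1, by simp [List.length_append]; omega⟩, Finset.mem_univ _, ?_⟩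
        simp only [splitMap]
        rw [dif_neg (by omega)]
        simp only [Finset.mem_singleton]
        rw [← hk]
        congr 1
        apply Fin.ext
        simp
  · have hφ : (compSingle (inlIdx A (cofiberObj B σ)) (inlG A (cofiberObj B σ))
        (fun _ => rfl) (splitMap u σ hu)).φ = u.φ := by
      funext i
      simp [compSingle, inlIdx, splitMap, i.2, hu]
    refine GHom.ext' hφ ?_
    intro i h h'
    simp only [compSingle, inlG, inlIdx, splitMap]
    split
    · simp only [Fin.eta]
      erw [eqToHom_trans_assoc, eqToHom_trans_assoc]
      simp
    · exact absurd i.2 (by assumption)
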